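/- Let g and f be real-valued functions on an interval I of ℝ, and suppose g is a control function of f on I and g is monotone increasing on I. Then f is midpoint convex on I, i.e., for all u < v in I, f((u+v)/2) ≤ (f(u) + f(v))/2. -/
import Mathlib


/-- `f` is a difference-quotient control function of `F` on the set `S`. -/
def IsControl (f F : ℝ → ℝ) (S : Set ℝ) : Prop :=
  ∀ u ∈ S, ∀ v ∈ S, u < v →
    ∃ p ∈ Set.Icc u v ∩ S, ∃ q ∈ Set.Icc u v ∩ S,
      f p ≤ (F v - F u) / (v - u) ∧ (F v - F u) / (v - u) ≤ f q

theorem midpoint_convex_of_increasing_control (I : Set ℝ) (hI : I.OrdConnected)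
    (g f : ℝ → ℝ) (hctrl : IsControl g f I) (hmono : MonotoneOn g I) :
    ∀ u ∈ I, ∀ v ∈ I, u < v → f ((u + v) / 2) ≤ (f u + f v) / 2 := by
  intro u hu v hv huv
  set m := (u + v) / 2 with hm
  have hum : u < m := by simp [hm]; linarith
  have hmv : m < v := by simp [hm]; linarith
  have hmI : m ∈ I := hI.out hu hv ⟨le_of_lt hum, le_of_lt hmv⟩
  obtain ⟨p, hp, q, ⟨hq1, hq2⟩, _, hq⟩ := hctrl u hu m hmI hum
  obtain ⟨p', ⟨hp1, hp2⟩, q', hq', hp', _⟩ := hctrl m hmI v hv hmv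
  have hgle : g q ≤ g p' := hmono hq2 hp2 (le_trans hq1.2 hp1.1)
  have hslope : (f m - f u) / (m - u) ≤ (f v - f m) / (v - m) :=
    le_trans hq (le_trans hgle hp')
  have h1 : (0:ℝ) < m - u := by linarith
  have h2 : (0:ℝ) < v - m := by linarith
  have heq : m - u = v - m := by simp [hm]; linarith
  rw [div_le_div_iff₀ h1 h2, heq] at hslope
  have := le_of_mul_le_mul_right hslope h2
  linarith
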